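/- For a full-rank lattice Λ in ℝⁿ, if x is a uniformly random point of the torus ℝⁿ/Λ, then the probability that dist(x, Λ) ≥ μ(Λ)/2 is at least 1/2, where μ(Λ) is the covering radius and dist(x,Λ) = min over z in Λ+x of ‖z‖. -/

import Mathlib

open MeasureTheory Real Matrix Set

/-- Euclidean norm on `Fin n → ℝ`. -/
noncomputable def enorm {n : ℕ} (x : Fin n → ℝ) : ℝ := Real.sqrt (∑ i, x i ^ 2)

/-- The lattice point of `Λ = B·ℤⁿ` corresponding to the integer vector `z`. -/
noncomputable def latPt {n : ℕ} (B : Matrix (Fin n) (Fin n) ℝ) (z : Fin n → ℤ) : Fin n → ℝ :=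
  B.mulVec fun i => (z i : ℝ)

/-- Euclidean distance from a point `x` to the lattice `B·ℤⁿ`. -/
noncomputable def distLat {n : ℕ} (B : Matrix (Fin n) (Fin n) ℝ) (x : Fin n → ℝ) : ℝ :=
  ⨅ z : Fin n → ℤ, enorm (x - latPt B z)

/-- The covering radius of the lattice `B·ℤⁿ`. -/
noncomputable def covRad {n : ℕ} (B : Matrix (Fin n) (Fin n) ℝ) : ℝ :=
  ⨆ x : Fin n → ℝ, distLat B x

/-- A fundamental domain of `B·ℤⁿ` (parametrizing the torus `ℝⁿ/Λ`). -/
noncomputable def fundDom {n : ℕ} (B : Matrix (Fin n) (Fin n) ℝ) : Set (Fin n → ℝ) :=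
  B.mulVec '' (Set.univ.pi fun _ : Fin n => Set.Ico (0 : ℝ) 1)


section lemmas
variable {n : ℕ} (B : Matrix (Fin n) (Fin n) ℝ)

lemma enorm_eq_norm (x : Fin n → ℝ) : _root_.enorm x = ‖(WithLp.equiv 2 (Fin n → ℝ)).symm x‖ := by
  rw [EuclideanSpace.norm_eq]
  simp [_root_.enorm, sq_abs]

lemma enorm_nonneg (x : Fin n → ℝ) : 0 ≤ _root_.enorm x := Real.sqrt_nonneg _

lemma enorm_zero' : _root_.enorm (0 : Fin n → ℝ) = 0 := by simp [_root_.enorm]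

lemma enorm_add_le' (x y : Fin n → ℝ) : _root_.enorm (x + y) ≤ _root_.enorm x + _root_.enorm y := by
  simp only [enorm_eq_norm]
  have : (WithLp.equiv 2 (Fin n → ℝ)).symm (x + y)
      = (WithLp.equiv 2 (Fin n → ℝ)).symm x + (WithLp.equiv 2 (Fin n → ℝ)).symm y := rfl
  rw [this]
  exact norm_add_le _ _

lemma continuous_enorm' : Continuous (_root_.enorm (n := n)) := by
  unfold _root_.enorm; fun_prop

lemma bddBelow_enormset (x : Fin n → ℝ) :
    BddBelow (Set.range fun z : Fin n → ℤ => _root_.enorm (x - latPt B z)) :=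
  ⟨0, by rintro y ⟨z, rfl⟩; exact enorm_nonneg _⟩

lemma distLat_le (x : Fin n → ℝ) (z : Fin n → ℤ) : distLat B x ≤ _root_.enorm (x - latPt B z) :=
  ciInf_le (bddBelow_enormset B x) z

lemma distLat_nonneg (x : Fin n → ℝ) : 0 ≤ distLat B x :=
  le_ciInf fun z => enorm_nonneg _

lemma latPt_add (z w : Fin n → ℤ) : latPt B (z + w) = latPt B z + latPt B w := by
  unfold latPt
  have h : (fun i => ((z + w) i : ℝ)) = (fun i => (z i : ℝ)) + fun i => (w i : ℝ) := by
    funext i; push_cast [Pi.add_apply]; ring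
  rw [h, Matrix.mulVec_add]

lemma latPt_sub (z w : Fin n → ℤ) : latPt B (z - w) = latPt B z - latPt B w := by
  unfold latPt
  have h : (fun i => ((z - w) i : ℝ)) = (fun i => (z i : ℝ)) - fun i => (w i : ℝ) := by
    funext i; push_cast [Pi.sub_apply]; ring
  rw [h, Matrix.mulVec_sub]

lemma distLat_add_le (u v : Fin n → ℝ) : distLat B (u + v) ≤ distLat B u + distLat B v := by
  have key : ∀ z w : Fin n → ℤ,
      distLat B (u + v) ≤ _root_.enorm (u - latPt B z) + _root_.enorm (v - latPt B w) := by
    intro z w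
    have h := distLat_le B (u + v) (z + w)
    rw [latPt_add] at h
    calc distLat B (u + v) ≤ _root_.enorm (u + v - (latPt B z + latPt B w)) := h
      _ = _root_.enorm ((u - latPt B z) + (v - latPt B w)) := by ring_nf
      _ ≤ _ := enorm_add_le' _ _
  have h1 : ∀ z : Fin n → ℤ, distLat B (u + v) - _root_.enorm (u - latPt B z) ≤ distLat B v := by
    intro z
    exact le_ciInf fun w => by linarith [key z w]
  have h2 : distLat B (u + v) - distLat B v ≤ distLat B u :=
    le_ciInf fun z => by linarith [h1 z]
  linarith

lemma distLat_vadd (x : Fin n → ℝ) (z0 : Fin n → ℤ) :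
    distLat B (latPt B z0 + x) = distLat B x := by
  unfold distLat
  have hfun : (fun z : Fin n → ℤ => _root_.enorm (latPt B z0 + x - latPt B z))
      = (fun z : Fin n → ℤ => _root_.enorm (x - latPt B z)) ∘ (fun z => z - z0) := by
    funext z
    simp only [Function.comp_apply, latPt_sub]
    congr 1; ring
  rw [iInf, iInf, hfun, Set.range_comp]
  congr 1
  rw [show (Set.range fun z : Fin n → ℤ => z - z0) = Set.range (Equiv.subRight z0) from rfl,
    Equiv.range_eq_univ, Set.image_univ]

lemma abs_distLat_sub_le (x y : Fin n → ℝ) : |distLat B x - distLat B y| ≤ _root_.enorm (x - y) := by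
  have key : ∀ u v : Fin n → ℝ, distLat B u - distLat B v ≤ _root_.enorm (u - v) := by
    intro u v
    have := distLat_add_le B (u - v) v
    simp only [sub_add_cancel] at this
    have h2 : distLat B (u - v) ≤ _root_.enorm (u - v) := by
      have := distLat_le B (u - v) 0
      have h0 : latPt B (0 : Fin n → ℤ) = 0 := by
        unfold latPt
        rw [show (fun i => ((0 : Fin n → ℤ) i : ℝ)) = (0 : Fin n → ℝ) by funext i; simp,
          Matrix.mulVec_zero]
      rwa [h0, sub_zero] at this
    linarith
  rw [abs_sub_le_iff]
  refine ⟨key x y, ?_⟩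
  have := key y x
  rwa [show y - x = -(x - y) by ring, show _root_.enorm (-(x-y)) = _root_.enorm (x - y) by
    simp only [_root_.enorm]; congr 1; apply Finset.sum_congr rfl; intro i _; simp only [Pi.neg_apply, Pi.sub_apply]; ring] at this

lemma continuous_distLat : Continuous (distLat B) := by
  rw [Metric.continuous_iff]
  intro x ε hε
  -- _root_.enorm (y - x) small when y close to x
  have h : ContinuousAt (fun y => _root_.enorm (y - x)) x := by
    exact (continuous_enorm'.comp (continuous_id.sub continuous_const)).continuousAt
  have h0 : _root_.enorm (x - x) = 0 := by simp [enorm_zero']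
  rw [Metric.continuousAt_iff] at h
  obtain ⟨δ, hδ, hd⟩ := h ε hε
  refine ⟨δ, hδ, fun y hy => ?_⟩
  have := hd hy
  rw [Real.dist_eq, h0, sub_zero] at this
  rw [Real.dist_eq]
  calc |distLat B y - distLat B x| ≤ _root_.enorm (y - x) := abs_distLat_sub_le B y x
    _ ≤ |_root_.enorm (y - x)| := le_abs_self _
    _ < ε := this

end lemmas

open Submodule

section part2
variable {n : ℕ} (B : Matrix (Fin n) (Fin n) ℝ) (hB : IsUnit B.det)

noncomputable def latBasis : Module.Basis (Fin n) ℝ (Fin n → ℝ) :=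
  (Pi.basisFun ℝ (Fin n)).map (B.toLinearEquiv' (B.invertibleOfIsUnitDet hB))

lemma latBasis_repr (x : Fin n → ℝ) (i : Fin n) :
    (latBasis B hB).repr x i = (B.toLinearEquiv' (B.invertibleOfIsUnitDet hB)).symm x i := by
  simp [latBasis, Module.Basis.map_repr]

lemma toLinEquiv_apply (v : Fin n → ℝ) :
    (B.toLinearEquiv' (B.invertibleOfIsUnitDet hB)) v = B.mulVec v := by
  have := Matrix.toLinearEquiv'_apply B (B.invertibleOfIsUnitDet hB)
  calc (B.toLinearEquiv' (B.invertibleOfIsUnitDet hB)) v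
      = (↑(B.toLinearEquiv' (B.invertibleOfIsUnitDet hB)) : Module.End ℝ (Fin n → ℝ)) v := rfl
    _ = Matrix.toLin' B v := by rw [this]
    _ = B.mulVec v := Matrix.toLin'_apply B v

include hB in
lemma fundDom_eq : fundDom B = ZSpan.fundamentalDomain (latBasis B hB) := by
  set e := B.toLinearEquiv' (B.invertibleOfIsUnitDet hB) with he
  have himg : fundDom B = ⇑e '' (Set.univ.pi fun _ : Fin n => Set.Ico (0 : ℝ) 1) :=
    Set.image_congr' fun v => (toLinEquiv_apply B hB v).symm
  rw [himg]
  ext x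
  simp only [ZSpan.mem_fundamentalDomain, latBasis_repr]
  rw [show ⇑e '' (Set.univ.pi fun _ : Fin n => Set.Ico (0:ℝ) 1)
      = ⇑e.symm ⁻¹' (Set.univ.pi fun _ : Fin n => Set.Ico (0:ℝ) 1) from
    e.image_eq_preimage_symm _]
  simp [Set.mem_pi]
  exact Iff.rfl

include hB in
lemma mem_latSpan_iff (y : Fin n → ℝ) :
    y ∈ span ℤ (Set.range (latBasis B hB)) ↔ ∃ z : Fin n → ℤ, y = latPt B z := by
  rw [Module.Basis.mem_span_iff_repr_mem]
  set e := B.toLinearEquiv' (B.invertibleOfIsUnitDet hB) with he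
  constructor
  · intro h
    choose z hz using h
    refine ⟨z, ?_⟩
    have : e.symm y = fun i => (z i : ℝ) := by
      funext i
      have := hz i
      rw [latBasis_repr] at this
      exact this.symm
    have hy : y = e (e.symm y) := (e.apply_symm_apply y).symm
    rw [hy, this, toLinEquiv_apply]
    rfl
  · rintro ⟨z, rfl⟩
    intro i
    rw [latBasis_repr]
    refine ⟨z i, ?_⟩
    have : latPt B z = e (fun i => (z i : ℝ)) := by rw [toLinEquiv_apply]; rfl
    rw [this, e.symm_apply_apply]
    simp


include hB in
lemma fundDomMeasurable : MeasurableSet (fundDom B) := by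
  rw [fundDom_eq B hB]
  exact ZSpan.fundamentalDomain_measurableSet _

include hB in
set_option maxHeartbeats 1000000 in
lemma core (t : Fin n → ℝ) (c : ℝ) (ht : 2 * c ≤ distLat B t) :
    volume (fundDom B) ≤ 2 * volume {x ∈ fundDom B | c ≤ distLat B x} := by
  classical
  set bb := latBasis B hB with hbb
  set F := fundDom B with hF
  have hFmeas : MeasurableSet F := fundDomMeasurable B hB
  have hFD : IsAddFundamentalDomain (span ℤ (Set.range bb)) F volume := by
    rw [hF, fundDom_eq B hB]
    exact ZSpan.isAddFundamentalDomain bb volume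
  set g : (Fin n → ℝ) → (Fin n → ℝ) := fun x => t - x with hg
  have hgg : ∀ x, g (g x) = x := fun x => by simp [hg]
  have hgmp : MeasurePreserving g volume volume := by
    have h1 : MeasurePreserving (fun x : Fin n → ℝ => -x) volume volume :=
      Measure.measurePreserving_neg volume
    have h2 : MeasurePreserving (fun x : Fin n → ℝ => t + x) volume volume :=
      measurePreserving_add_left volume t
    have : g = (fun x : Fin n → ℝ => t + x) ∘ (fun x => -x) := by
      funext x; simp [hg, sub_eq_add_neg]
    rw [this]
    exact h2.comp h1
  have hFD2 : IsAddFundamentalDomain (span ℤ (Set.range bb)) (g ⁻¹' F) volume := by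
    refine hFD.preimage_of_equiv (hgmp.quasiMeasurePreserving)
      (e := fun l => -l) (Equiv.neg _).bijective (fun l x => ?_)
    show g ((-l) +ᵥ x) = l +ᵥ g x
    show t - ((-(l : Fin n → ℝ)) + x) = (l : Fin n → ℝ) + (t - x)
    ring
  haveI : MeasurableVAdd (↥(span ℤ (Set.range bb))) (Fin n → ℝ) := by
    constructor
    · intro x
      exact measurable_subtype_coe.add_const x
  haveI : VAddInvariantMeasure (↥(span ℤ (Set.range bb))) (Fin n → ℝ) volume := by
    constructor
    intro c s hs
    exact measure_preimage_add volume (c : Fin n → ℝ) s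
  set D : Set (Fin n → ℝ) := distLat B ⁻¹' Set.Ici c with hD
  have hDmeas : MeasurableSet D :=
    (continuous_distLat B).measurable measurableSet_Ici
  have hDinv : ∀ l : span ℤ (Set.range bb), (fun x => l +ᵥ x) ⁻¹' D = D := by
    intro l
    obtain ⟨z, hz⟩ := (mem_latSpan_iff B hB (l : Fin n → ℝ)).mp l.2
    ext x
    simp only [Set.mem_preimage, hD, Set.mem_Ici]
    show c ≤ distLat B ((l : Fin n → ℝ) + x) ↔ c ≤ distLat B x
    rw [hz, distLat_vadd]
  set A := F ∩ D with hA
  have hAset : {x ∈ F | c ≤ distLat B x} = A := by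
    ext x; simp [hA, hD, Set.mem_sep_iff, and_comm]
  rw [hAset]
  have hsub : F \ A ⊆ F ∩ g ⁻¹' D := by
    rintro x ⟨hxF, hxA⟩
    have hxD : distLat B x < c := by
      by_contra h
      exact hxA ⟨hxF, by simpa [hD] using not_lt.mp h⟩
    refine ⟨hxF, ?_⟩
    have h1 : distLat B t ≤ distLat B x + distLat B (t - x) := by
      have := distLat_add_le B x (t - x)
      rwa [add_sub_cancel] at this
    simp only [Set.mem_preimage, hD, Set.mem_Ici, hg]
    linarith
  have hstep : volume (F ∩ g ⁻¹' D) = volume A := by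
    have e1 : F ∩ g ⁻¹' D = g ⁻¹' (g ⁻¹' F ∩ D) := by
      rw [Set.preimage_inter]
      have h9 : g ⁻¹' (g ⁻¹' F) = F := by
        ext x
        constructor
        · intro hx
          simpa [Set.mem_preimage, hgg x] using hx
        · intro hx
          simpa [Set.mem_preimage, hgg x] using hx
      rw [h9]
    have e2 : volume (g ⁻¹' (g ⁻¹' F ∩ D)) = volume (g ⁻¹' F ∩ D) :=
      hgmp.measure_preimage
        (((hgmp.measurable hFmeas).inter hDmeas).nullMeasurableSet)
    have e3 : volume (D ∩ g ⁻¹' F) = volume (D ∩ F) :=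
      hFD2.measure_set_eq hFD hDmeas hDinv
    rw [e1, e2, Set.inter_comm, e3, Set.inter_comm, hA]
  calc volume F ≤ volume (A ∪ (F \ A)) := by
        apply measure_mono
        intro x hx
        by_cases h : x ∈ A
        · exact Or.inl h
        · exact Or.inr ⟨hx, h⟩
    _ ≤ volume A + volume (F \ A) := measure_union_le _ _
    _ ≤ volume A + volume (F ∩ g ⁻¹' D) := add_le_add_right (measure_mono hsub) _
    _ = volume A + volume A := by rw [hstep]
    _ = 2 * volume A := (two_mul _).symm

include hB in
lemma fundDomFinite : volume (fundDom B) ≠ ⊤ := by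
  have hK : IsCompact (B.mulVec '' (Set.univ.pi fun _ : Fin n => Set.Icc (0:ℝ) 1)) := by
    refine (isCompact_univ_pi fun _ => isCompact_Icc).image ?_
    have := (Matrix.mulVecLin B).continuous_of_finiteDimensional
    exact this
  have hsub : fundDom B ⊆ B.mulVec '' (Set.univ.pi fun _ : Fin n => Set.Icc (0:ℝ) 1) := by
    apply Set.image_mono
    intro v hv i _
    exact Set.Ico_subset_Icc_self (hv i trivial)
  exact ne_top_of_le_ne_top hK.measure_lt_top.ne (measure_mono hsub)

include hB in
theorem stmtAux :
    volume (fundDom B) / 2 ≤ volume {x ∈ fundDom B | covRad B / 2 ≤ distLat B x} := by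
  classical
  rcases le_or_gt (covRad B) 0 with h0 | hpos
  · have hset : {x ∈ fundDom B | covRad B / 2 ≤ distLat B x} = fundDom B := by
      ext x
      simp only [Set.mem_sep_iff, and_iff_left_iff_imp]
      intro _
      linarith [distLat_nonneg B x]
    rw [hset]
    exact ENNReal.half_le_self
  · have hbdd : BddAbove (Set.range (distLat B)) := by
      by_contra h
      rw [covRad, Real.iSup_of_not_bddAbove h] at hpos
      exact lt_irrefl 0 hpos
    have hne : (Set.range (distLat B)).Nonempty := ⟨_, ⟨0, rfl⟩⟩
    set c : ℕ → ℝ := fun k => (covRad B - 1 / (k + 1)) / 2 with hc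
    set A : ℕ → Set (Fin n → ℝ) := fun k => {x ∈ fundDom B | c k ≤ distLat B x} with hA
    have hAk : ∀ k, volume (fundDom B) ≤ 2 * volume (A k) := by
      intro k
      have hpos' : (0:ℝ) < 1 / (k + 1) := by positivity
      have hlt : covRad B - 1 / (k + 1) < sSup (Set.range (distLat B)) := by
        rw [show sSup (Set.range (distLat B)) = covRad B from rfl]
        linarith
      obtain ⟨y, ⟨t, rfl⟩, hy⟩ := exists_lt_of_lt_csSup hne hlt
      exact core B hB t (c k) (by rw [hc]; linarith)
    have hmono : Monotone c := by
      intro k l hkl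
      have h1 : (1:ℝ) / (l + 1) ≤ 1 / (k + 1) := by
        apply one_div_le_one_div_of_le
        · positivity
        · have : (k:ℝ) ≤ l := Nat.cast_le.mpr hkl
          linarith
      rw [hc]
      simp only
      linarith
    have hanti : Antitone A := by
      intro k l hkl x hx
      exact ⟨hx.1, le_trans (hmono hkl) hx.2⟩
    have hmeasA : ∀ k, NullMeasurableSet (A k) volume := by
      intro k
      have heq : A k = fundDom B ∩ distLat B ⁻¹' Set.Ici (c k) := by
        ext x; simp [hA, Set.mem_sep_iff]
      rw [heq]
      exact ((fundDomMeasurable B hB).inter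
        ((continuous_distLat B).measurable measurableSet_Ici)).nullMeasurableSet
    have hfin : ∃ k, volume (A k) ≠ ⊤ := by
      refine ⟨0, ne_top_of_le_ne_top (fundDomFinite B hB) (measure_mono ?_)⟩
      intro x hx
      exact hx.1
    have hinter : {x ∈ fundDom B | covRad B / 2 ≤ distLat B x} = ⋂ k, A k := by
      ext x
      simp only [Set.mem_iInter, hA, Set.mem_sep_iff]
      constructor
      · intro ⟨h1, h2⟩ k
        refine ⟨h1, le_trans ?_ h2⟩
        rw [hc]
        have : (0:ℝ) < 1 / ((k:ℝ) + 1) := by positivity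
        simp only
        linarith
      · intro h
        refine ⟨(h 0).1, ?_⟩
        have htend : Filter.Tendsto c Filter.atTop (nhds (covRad B / 2)) := by
          rw [hc]
          have h1 : Filter.Tendsto (fun k : ℕ => 1 / ((k:ℝ) + 1)) Filter.atTop (nhds 0) :=
            tendsto_one_div_add_atTop_nhds_zero_nat
          have h2 := (h1.const_sub (covRad B)).div_const 2
          simpa using h2
        exact le_of_tendsto' htend fun k => (h k).2
    rw [hinter, hanti.measure_iInter hmeasA hfin]
    refine le_iInf fun k => ?_
    rw [ENNReal.div_le_iff_le_mul (Or.inl two_ne_zero) (Or.inl ENNReal.ofNat_ne_top)]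
    rw [mul_comm]
    exact hAk k

end part2


/-- For a uniformly random point `x` of the torus `ℝⁿ/Λ`, the probability that
`dist(x,Λ) ≥ μ(Λ)/2` is at least `1/2`. -/
theorem stmt0 {n : ℕ} (B : Matrix (Fin n) (Fin n) ℝ) (hB : IsUnit B.det) :
    volume (fundDom B) / 2 ≤ volume {x ∈ fundDom B | covRad B / 2 ≤ distLat B x} :=
  stmtAux B hB
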